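/- Let L be an n-dimensional complex vector space with basis y₁,…,yₙ (n ≥ 3) with bracket [yᵢ,y₁] = y_{i+1} for 1 ≤ i ≤ n-2, [yₙ,yₙ] = y_{n-1}, and all other products of basis vectors zero. Then L is a Leibniz algebra satisfying the identity [x,[y,z]] = [[x,y],z] - [[x,z],y]. -/
import Mathlib


/-- The algebra M₃: [yᵢ,y₁] = y_{i+1} for 1 ≤ i ≤ n-2, [yₙ,yₙ] = y_{n-1},
all other products of basis vectors zero.  This bracket satisfies the
Leibniz identity. -/
theorem M3_is_Leibniz
    (n : ℕ) (hn : 3 ≤ n)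
    (V : Type*) [AddCommGroup V] [Module ℂ V]
    (y : ℕ → V)
    (hindep : LinearIndependent ℂ (fun i : Fin n => y (i.val + 1)))
    (hspan : Submodule.span ℂ (Set.range (fun i : Fin n => y (i.val + 1))) = ⊤)
    (B : V →ₗ[ℂ] V →ₗ[ℂ] V)
    (h1 : ∀ i, 1 ≤ i → i ≤ n - 2 → B (y i) (y 1) = y (i + 1))
    (h2 : B (y n) (y n) = y (n - 1))
    (h0 : ∀ i j, 1 ≤ i → i ≤ n → 1 ≤ j → j ≤ n →
      ¬(j = 1 ∧ i ≤ n - 2) → ¬(i = n ∧ j = n) → B (y i) (y j) = 0) :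
    ∀ x u z : V, B x (B u z) = B (B x u) z - B (B x z) u := by
  -- the identity on basis vectors
  have hbasis : ∀ a b c, 1 ≤ a → a ≤ n → 1 ≤ b → b ≤ n → 1 ≤ c → c ≤ n →
      B (y a) (B (y b) (y c)) = B (B (y a) (y b)) (y c) - B (B (y a) (y c)) (y b) := by
    intro a b c ha1 ha2 hb1 hb2 hc1 hc2
    by_cases h : c = 1 ∧ b ≤ n - 2
    · obtain ⟨rfl, hbn2⟩ := h
      rw [h1 b hb1 hbn2]
      rw [h0 a (b + 1) ha1 ha2 (by omega) (by omega) (by omega) (by omega)]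
      by_cases hb : b = 1
      · subst hb
        exact (sub_self _).symm
      · rw [h0 a b ha1 ha2 hb1 hb2 (by omega) (by omega)]
        simp only [map_zero, LinearMap.zero_apply, zero_sub]
        by_cases ha : a ≤ n - 2
        · rw [h1 a ha1 ha,
            h0 (a + 1) b (by omega) (by omega) hb1 hb2 (by omega) (by omega)]
          simp
        · rw [h0 a 1 ha1 ha2 le_rfl (by omega) (by omega) (by omega)]
          simp
    · by_cases h' : b = n ∧ c = n
      · rw [h'.1, h'.2, h2, h0 a (n - 1) ha1 ha2 (by omega) (by omega) (by omega) (by omega),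
          sub_self]
      · rw [h0 b c hb1 hb2 hc1 hc2 h h', map_zero]
        have t1 : B (B (y a) (y b)) (y c) = 0 := by
          by_cases hb' : b = 1 ∧ a ≤ n - 2
          · obtain ⟨rfl, han⟩ := hb'
            rw [h1 a ha1 han,
              h0 (a + 1) c (by omega) (by omega) hc1 hc2 (by omega) (by omega)]
          · by_cases hab : a = n ∧ b = n
            · rw [hab.1, hab.2, h2,
                h0 (n - 1) c (by omega) (by omega) hc1 hc2 (by omega) (by omega)]
            · rw [h0 a b ha1 ha2 hb1 hb2 hb' hab]
              simp
        have t2 : B (B (y a) (y c)) (y b) = 0 := by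
          by_cases hc' : c = 1 ∧ a ≤ n - 2
          · obtain ⟨rfl, han⟩ := hc'
            rw [h1 a ha1 han,
              h0 (a + 1) b (by omega) (by omega) hb1 hb2 (by omega) (by omega)]
          · by_cases hac : a = n ∧ c = n
            · rw [hac.1, hac.2, h2,
                h0 (n - 1) b (by omega) (by omega) hb1 hb2 (by omega) (by omega)]
            · rw [h0 a c ha1 ha2 hc1 hc2 hc' hac]
              simp
        rw [t1, t2, sub_zero]
  have hmem : ∀ v : V,
      v ∈ Submodule.span ℂ (Set.range (fun i : Fin n => y (i.val + 1))) := by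
    intro v; rw [hspan]; trivial
  intro x u z
  induction hmem x using Submodule.span_induction with
  | mem x hx =>
    obtain ⟨i, rfl⟩ := hx
    induction hmem u using Submodule.span_induction with
    | mem u hu =>
      obtain ⟨j, rfl⟩ := hu
      induction hmem z using Submodule.span_induction with
      | mem z hz =>
        obtain ⟨k, rfl⟩ := hz
        exact hbasis _ _ _ (by omega) (by omega) (by omega) (by omega)
          (by omega) (by omega)
      | zero => simp
      | add z1 z2 hz1 hz2 p1 p2 =>
        simp only [map_add, LinearMap.add_apply, p1, p2]
        abel
      | smul c z hz p =>
        simp only [map_smul, LinearMap.smul_apply, p, smul_sub]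
    | zero => simp
    | add u1 u2 hu1 hu2 p1 p2 =>
      simp only [map_add, LinearMap.add_apply, p1, p2]
      abel
    | smul c u hu p =>
      simp only [map_smul, LinearMap.smul_apply, p, smul_sub]
  | zero => simp
  | add x1 x2 hx1 hx2 p1 p2 =>
    simp only [map_add, LinearMap.add_apply, p1, p2]
    abel
  | smul c x hx p =>
    simp only [map_smul, LinearMap.smul_apply, p, smul_sub]
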